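/- The subgroup Γ_C acts freely on the upper half-plane: for every g ∈ Γ_C and every z ∈ ℍ, if g • z = z then g = 1. -/

import Mathlib

open UpperHalfPlane MatrixGroups

noncomputable section

/-- `s k = Σᵢ 2·tᵢ·3ⁱ` where `k = Σᵢ tᵢ·2ⁱ` is the binary expansion of `k`;
equivalently `s 0 = 0`, `s (2j) = 3·(s j)`, `s (2j+1) = 3·(s j) + 2`. -/
def s : ℕ → ℕ
  | 0 => 0
  | k + 1 =>
    if (k + 1) % 2 = 0 then 3 * s ((k + 1) / 2)
    else 3 * s ((k + 1) / 2) + 2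
decreasing_by all_goals (simp_wf; omega)

/-- The midpoint of the middle third removed at stage `n` from the `k`-th interval of
stage `n−1` of the middle-thirds construction on `[1,2]`. -/
def alphaC (n k : ℕ) : ℝ := 1 + (3 * s k + 1) / 3 ^ n + 1 / (2 * 3 ^ n)

/-- The common radius of the half-circles at stage `n`. -/
def radC (n : ℕ) : ℝ := 1 / (4 * 3 ^ n)

lemma radC_ne (n : ℕ) : radC n ≠ 0 := by unfold radC; positivity

/-- `N(β,β',r)` is the element of `SL(2,ℝ)` whose Möbius transformation has isometric circle
the half-circle of radius `r` centered at `β`, mapped onto the half-circle of radius `r`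
centered at `β'`. -/
def Nmat (β β' r : ℝ) (hr : r ≠ 0) : SL(2, ℝ) :=
  ⟨!![β' / r, -(β * β' + r ^ 2) / r; 1 / r, -β / r], by
    rw [Matrix.det_fin_two_of]; field_simp; ring⟩

/-- `M(α,r) := N(α, −α, r)`. -/
def Mmat (a r : ℝ) (hr : r ≠ 0) : SL(2, ℝ) := Nmat a (-a) r hr

/-- The subgroup of `SL(2,ℝ)` generated by the `M(α(n,k), r(n))`. -/
def ΓC : Subgroup SL(2, ℝ) :=
  Subgroup.closure
    {g | ∃ n k : ℕ, 1 ≤ n ∧ k < 2 ^ (n - 1) ∧ g = Mmat (alphaC n k) (radC n) (radC_ne n)}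

/-! ### Auxiliary development -/

lemma s_rec (k : ℕ) : s k = 3 * s (k / 2) + 2 * (k % 2) := by
  match k with
  | 0 => simp [s]
  | k + 1 =>
    rw [s]
    rcases Nat.mod_two_eq_zero_or_one (k + 1) with h | h <;> simp [h]

lemma s_inj_aux : ∀ N k k' : ℕ, k + k' ≤ N → s k = s k' → k = k' := by
  intro N
  induction N with
  | zero => intro k k' h _; omega
  | succ N IH =>
    intro k k' hN h
    have h1 := s_rec k
    have h2 := s_rec k'
    rcases Nat.eq_zero_or_pos (k + k') with h0 | h0
    · omega
    · have e1 : s (k / 2) = s (k' / 2) := by omega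
      have := IH (k / 2) (k' / 2) (by omega) e1
      omega

/-- Key integer estimate, by induction on `d`. -/
lemma skey : ∀ d : ℕ, 1 ≤ d → ∀ (m : ℤ) (k : ℕ),
    3 ^ d + 9 ≤ 6 * (3 ^ d * (2 * m + 1) - (2 * (s k : ℤ) + 1)) ∨
    6 * (3 ^ d * (2 * m + 1) - (2 * (s k : ℤ) + 1)) ≤ -(3 ^ d + 9) := by
  intro d hd
  induction d, hd using Nat.le_induction with
  | base =>
    intro m k
    have h1 : (s k : ℤ) = 3 * (s (k / 2) : ℤ) + 2 * ((k : ℤ) % 2) := by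
      have := s_rec k
      have h2 : (k : ℤ) % 2 = ((k % 2 : ℕ) : ℤ) := by omega
      omega
    rw [pow_one]
    omega
  | succ d hd IH =>
    intro m k
    have IH' := IH m (k / 2)
    have h1 : (s k : ℤ) = 3 * (s (k / 2) : ℤ) + 2 * ((k : ℤ) % 2) := by
      have := s_rec k
      have h2 : (k : ℤ) % 2 = ((k % 2 : ℕ) : ℤ) := by omega
      omega
    have h3 : (3 : ℤ) ^ (d + 1) = 3 ^ d * 3 := pow_succ 3 d
    have hX : (3 : ℤ) ≤ 3 ^ d := by
      calc (3 : ℤ) = 3 ^ 1 := (pow_one 3).symm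
      _ ≤ 3 ^ d := pow_le_pow_right₀ (by norm_num) hd
    set X : ℤ := (3 : ℤ) ^ d with hXdef
    set C : ℤ := X * (2 * m + 1) - (2 * (s (k / 2) : ℤ) + 1) with hCdef
    have hC' : 3 ^ (d + 1) * (2 * m + 1) - (2 * (s k : ℤ) + 1) =
        3 * C + 2 - 4 * ((k : ℤ) % 2) := by
      rw [h3, h1, hCdef]; ring
    rw [hC', h3]
    omega

/-- The main integer separation inequality. -/
lemma intKey (n n' k k' : ℕ) (h : (n, k) ≠ (n', k')) :
    (3 : ℤ) ^ n + 3 ^ n' <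
      2 * |3 ^ n' * (6 * (s k : ℤ) + 3) - 3 ^ n * (6 * (s k' : ℤ) + 3)| := by
  -- WLOG n ≤ n'
  wlog hnn : n ≤ n' generalizing n n' k k'
  · have := this n' n k' k (by simpa [eq_comm, Prod.ext_iff] using h) (by omega)
    rw [abs_sub_comm] at this
    linarith
  obtain ⟨d, rfl⟩ : ∃ d, n' = n + d := ⟨n' - n, by omega⟩
  have hA : (3 : ℤ) ^ (n + d) * (6 * (s k : ℤ) + 3) - 3 ^ n * (6 * (s k' : ℤ) + 3) =
      3 ^ n * 3 * (3 ^ d * (2 * (s k : ℤ) + 1) - (2 * (s k' : ℤ) + 1)) := by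
    rw [pow_add]; ring
  set C : ℤ := 3 ^ d * (2 * (s k : ℤ) + 1) - (2 * (s k' : ℤ) + 1) with hCdef
  have h3n : (0 : ℤ) < 3 ^ n := by positivity
  rw [hA, abs_mul, abs_of_pos (by positivity : (0:ℤ) < (3:ℤ) ^ n * 3)]
  rcases Nat.eq_zero_or_pos d with hd | hd
  · -- same level: use injectivity of s
    subst hd
    have hk : k ≠ k' := by simpa using h
    have hs : (s k : ℤ) ≠ (s k' : ℤ) := by
      intro hc
      exact hk (s_inj_aux (k + k') k k' le_rfl (by exact_mod_cast hc))
    have hCval : C = 2 * (s k : ℤ) - 2 * (s k' : ℤ) := by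
      rw [hCdef, pow_zero]; ring
    have hC1 : 1 ≤ |C| := by
      rcases abs_cases C with ⟨he, _⟩ | ⟨he, _⟩ <;> omega
    have : (3:ℤ)^n + 3^(n+0) = 2 * 3^n := by ring_nf
    rw [this]
    calc (2:ℤ) * 3 ^ n < 6 * 3^n := by linarith
    _ ≤ 6 * 3 ^ n * |C| := le_mul_of_one_le_right (by positivity) hC1
    _ = 2 * (3 ^ n * 3 * |C|) := by ring
  · -- different levels: use skey
    have hk := skey d hd (s k) k'
    have habs : (3:ℤ) ^ d + 9 ≤ 6 * |C| := by
      rcases hk with h' | h' <;>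
        rcases abs_cases C with ⟨he, _⟩ | ⟨he, _⟩ <;> omega
    have hpow : (3:ℤ) ^ (n + d) = 3 ^ n * 3 ^ d := pow_add 3 n d
    calc (3:ℤ) ^ n + 3 ^ (n + d) = 3 ^ n * (3 ^ d + 1) := by rw [hpow]; ring
    _ < 3 ^ n * (3 ^ d + 9) := by
        have : (3:ℤ)^d + 1 < 3^d + 9 := by omega
        exact mul_lt_mul_of_pos_left this h3n
    _ ≤ 3 ^ n * (6 * |C|) := mul_le_mul_of_nonneg_left habs (le_of_lt h3n)
    _ = 2 * (3 ^ n * 3 * |C|) := by ring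

/-! ### Letters -/

/-- A letter: stage `n`, index `k`, and a sign (`true` for the generator,
`false` for its inverse). -/
abbrev Lett := ℕ × ℕ × Bool

/-- Matrix of a letter. -/
def matL : Lett → SL(2, ℝ)
  | (n, k, true) => Mmat (alphaC n k) (radC n) (radC_ne n)
  | (n, k, false) => (Mmat (alphaC n k) (radC n) (radC_ne n))⁻¹

/-- Center of the source (isometric) circle of a letter. -/
def srcL : Lett → ℝ
  | (n, k, true) => alphaC n k
  | (n, k, false) => -alphaC n k

/-- Radius of the isometric circle of a letter. -/
def radL (ℓ : Lett) : ℝ := radC ℓ.1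

/-- Formal inverse of a letter. -/
def linv (ℓ : Lett) : Lett := (ℓ.1, ℓ.2.1, !ℓ.2.2)

lemma linv_linv (ℓ : Lett) : linv (linv ℓ) = ℓ := by
  obtain ⟨n, k, b⟩ := ℓ; cases b <;> rfl

lemma linv_ne (ℓ : Lett) : linv ℓ ≠ ℓ := by
  obtain ⟨n, k, b⟩ := ℓ; cases b <;> simp [linv]

lemma srcL_linv (ℓ : Lett) : srcL (linv ℓ) = -srcL ℓ := by
  obtain ⟨n, k, b⟩ := ℓ; cases b <;> simp [linv, srcL]

lemma radL_linv (ℓ : Lett) : radL (linv ℓ) = radL ℓ := rfl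

lemma matL_linv (ℓ : Lett) : matL (linv ℓ) = (matL ℓ)⁻¹ := by
  obtain ⟨n, k, b⟩ := ℓ; cases b <;> simp [linv, matL]

lemma radC_pos (n : ℕ) : 0 < radC n := by unfold radC; positivity

lemma radC_le (n : ℕ) : radC n ≤ 1 / 4 := by
  unfold radC
  rw [div_le_div_iff₀ (by positivity) (by norm_num)]
  have : (1:ℝ) ≤ 3 ^ n := one_le_pow₀ (by norm_num : (1:ℝ) ≤ 3)
  nlinarith

lemma alphaC_gt_one (n k : ℕ) : 1 < alphaC n k := by
  unfold alphaC
  have h1 : (0:ℝ) < (3 * s k + 1) / 3 ^ n := by positivity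
  have h2 : (0:ℝ) < 1 / (2 * 3 ^ n) := by positivity
  linarith

/-- Distinct centers at (possibly different) stages are far apart. -/
lemma alpha_dist (n k n' k' : ℕ) (h : (n, k) ≠ (n', k')) :
    radC n + radC n' < |alphaC n k - alphaC n' k'| := by
  have key := intKey n n' k k' h
  set A : ℤ := 3 ^ n' * (6 * (s k : ℤ) + 3) - 3 ^ n * (6 * (s k' : ℤ) + 3) with hAdef
  have hdiff : alphaC n k - alphaC n' k' = (A : ℝ) / (2 * 3 ^ (n + n')) := by
    unfold alphaC
    rw [hAdef]
    push_cast
    rw [pow_add]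
    field_simp
    ring
  rw [hdiff, abs_div, abs_of_pos (by positivity : (0:ℝ) < 2 * 3 ^ (n + n'))]
  rw [lt_div_iff₀ (by positivity : (0:ℝ) < 2 * 3 ^ (n + n'))]
  have hkey : (3:ℝ) ^ n + 3 ^ n' < 2 * |(A : ℝ)| := by
    rw [← Int.cast_abs]
    exact_mod_cast key
  have hexp : (radC n + radC n') * (2 * 3 ^ (n + n')) = ((3:ℝ) ^ n + 3 ^ n') / 2 := by
    unfold radC
    rw [pow_add]
    field_simp
    ring
  rw [hexp]
  linarith

/-- Distinct letters have disjoint (closed) isometric disks. -/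
lemma srcL_dist (p q : Lett) (h : p ≠ q) : radL p + radL q < |srcL p - srcL q| := by
  obtain ⟨n, k, b⟩ := p; obtain ⟨n', k', b'⟩ := q
  have hrad : radL ((n,k,b) : Lett) = radC n := rfl
  have hrad' : radL ((n',k',b') : Lett) = radC n' := rfl
  rw [hrad, hrad']
  have hopp : ∀ n k n' k' : ℕ,
      radC n + radC n' < |alphaC n k - -alphaC n' k'| := by
    intro n k n' k'
    have h1 := alphaC_gt_one n k
    have h2 := alphaC_gt_one n' k'
    have h3 := radC_le n
    have h4 := radC_le n'
    rw [abs_of_pos (by linarith)]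
    linarith
  cases b <;> cases b' <;> simp only [srcL]
  · -- both false
    have hkk : (n, k) ≠ (n', k') := by simpa [Prod.ext_iff] using h
    rw [show -alphaC n k - -alphaC n' k' = -(alphaC n k - alphaC n' k') by ring, abs_neg]
    exact alpha_dist n k n' k' hkk
  · -- false, true
    rw [show -alphaC n k - alphaC n' k' = -(alphaC n' k' - -alphaC n k) by ring, abs_neg]
    have := hopp n' k' n k
    linarith
  · exact hopp n k n' k'
  · have hkk : (n, k) ≠ (n', k') := by simpa [Prod.ext_iff] using h
    exact alpha_dist n k n' k' hkk

/-- If `x` is in the closed disk of `p` and `q ≠ p`, then `x` is strictly outside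
the closed disk of `q`. -/
lemma outside_of_inside (p q : Lett) (h : p ≠ q) (x : ℂ)
    (hx : ‖x - (srcL p : ℝ)‖ ≤ radL p) :
    radL q < ‖x - (srcL q : ℝ)‖ := by
  have hd := srcL_dist p q h
  have htri : |srcL p - srcL q| ≤
      ‖x - (srcL p : ℝ)‖ + ‖x - (srcL q : ℝ)‖ := by
    have h2 := norm_sub_le_norm_sub_add_norm_sub ((srcL p : ℝ) : ℂ) x ((srcL q : ℝ) : ℂ)
    have h3 : ‖((srcL p : ℝ) : ℂ) - x‖ = ‖x - (srcL p : ℝ)‖ :=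
      norm_sub_rev _ _
    have h4 : |srcL p - srcL q| = ‖((srcL p : ℝ) : ℂ) - (srcL q : ℝ)‖ := by
      rw [← Complex.ofReal_sub, Complex.norm_real, Real.norm_eq_abs]
    rw [h4]
    linarith
  linarith

/-! ### The action of a letter -/

lemma coe_ne_real (z : ℍ) (a : ℝ) : (z : ℂ) - a ≠ 0 := by
  intro h
  have : ((z : ℂ) - a).im = 0 := by rw [h]; simp
  simp only [Complex.sub_im, Complex.ofReal_im, sub_zero, UpperHalfPlane.coe_im] at this
  exact (z.im_pos).ne' this

lemma Mmat_smul (a r : ℝ) (hr : r ≠ 0) (z : ℍ) :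
    ((Mmat a r hr • z : ℍ) : ℂ) = -a - r ^ 2 / ((z : ℂ) - a) := by
  rw [UpperHalfPlane.specialLinearGroup_apply, UpperHalfPlane.coe_mk]
  have hz := coe_ne_real z a
  have hrc : (r : ℂ) ≠ 0 := Complex.ofReal_ne_zero.mpr hr
  have e00 : Mmat a r hr 0 0 = -a / r := rfl
  have e01 : Mmat a r hr 0 1 = -(a * -a + r ^ 2) / r := rfl
  have e10 : Mmat a r hr 1 0 = 1 / r := rfl
  have e11 : Mmat a r hr 1 1 = -a / r := rfl
  rw [e00, e01, e10, e11]
  simp only [Algebra.algebraMap_self, RingHom.id_apply]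
  have hden : ((1 / r : ℝ) : ℂ) * z + ((-a / r : ℝ) : ℂ) = ((z : ℂ) - a) / r := by
    push_cast; ring
  rw [hden, div_eq_iff (div_ne_zero hz hrc)]
  push_cast
  field_simp
  ring

lemma Mmat_inv_smul (a r : ℝ) (hr : r ≠ 0) (z : ℍ) :
    (Mmat a r hr)⁻¹ • z = Mmat (-a) r hr • z := by
  rw [inv_smul_eq_iff]
  apply UpperHalfPlane.ext
  rw [Mmat_smul a r hr (Mmat (-a) r hr • z), Mmat_smul (-a) r hr z]
  have hz : (z : ℂ) + a ≠ 0 := by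
    have := coe_ne_real z (-a); push_cast at this
    intro hc; apply this; rw [← hc]; ring
  have hrc : (r : ℂ) ≠ 0 := Complex.ofReal_ne_zero.mpr hr
  push_cast
  have hz' : (z : ℂ) - -(a:ℂ) ≠ 0 := by rwa [sub_neg_eq_add]
  have h2 : (r:ℂ) ^ 2 / ((z:ℂ) + a) ≠ 0 :=
    div_ne_zero (pow_ne_zero 2 hrc) hz
  have hd : -(-(a:ℂ)) - (r:ℂ) ^ 2 / ((z:ℂ) - -(a:ℂ)) - (a:ℂ) ≠ 0 := by
    have he : -(-(a:ℂ)) - (r:ℂ) ^ 2 / ((z:ℂ) - -(a:ℂ)) - (a:ℂ) =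
        -((r:ℂ) ^ 2 / ((z:ℂ) + a)) := by
      rw [sub_neg_eq_add]; ring
    rw [he]
    exact neg_ne_zero.mpr h2
  have hDval : - -(a:ℂ) - (r:ℂ) ^ 2 / ((z:ℂ) - -(a:ℂ)) - (a:ℂ) =
      -((r:ℂ) ^ 2 / ((z:ℂ) + a)) := by
    rw [sub_neg_eq_add]; ring
  rw [hDval, div_neg, sub_neg_eq_add, div_div_eq_mul_div,
    mul_comm ((r:ℂ) ^ 2) ((z:ℂ) + a), mul_div_assoc, div_self (pow_ne_zero 2 hrc), mul_one]
  ring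

lemma matL_smul (ℓ : Lett) (z : ℍ) :
    ((matL ℓ • z : ℍ) : ℂ) = -srcL ℓ - (radL ℓ) ^ 2 / ((z : ℂ) - srcL ℓ) := by
  obtain ⟨n, k, b⟩ := ℓ
  cases b
  · have h0 : matL (n, k, false) = (Mmat (alphaC n k) (radC n) (radC_ne n))⁻¹ := rfl
    have h1 : srcL ((n, k, false) : Lett) = -alphaC n k := rfl
    have h2 : radL ((n, k, false) : Lett) = radC n := rfl
    rw [h0, h1, h2, Mmat_inv_smul, Mmat_smul]
  · have h0 : matL (n, k, true) = Mmat (alphaC n k) (radC n) (radC_ne n) := rfl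
    have h1 : srcL ((n, k, true) : Lett) = alphaC n k := rfl
    have h2 : radL ((n, k, true) : Lett) = radC n := rfl
    rw [h0, h1, h2, Mmat_smul]

/-- The basic ping-pong step for a single letter. -/
lemma letter_step (ℓ : Lett) (z : ℍ)
    (h : radL ℓ < ‖(z : ℂ) - srcL ℓ‖) :
    ‖((matL ℓ • z : ℍ) : ℂ) + srcL ℓ‖ < radL ℓ ∧
      (matL ℓ • z).im < z.im := by
  have hrpos := radC_pos ℓ.1
  have hrpos' : (0:ℝ) < radL ℓ := hrpos
  have hu : (z : ℂ) - srcL ℓ ≠ 0 := coe_ne_real z _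
  have habs : ‖(z : ℂ) - srcL ℓ‖ > 0 := norm_pos_iff.mpr hu
  constructor
  · rw [matL_smul]
    have : -(srcL ℓ : ℂ) - (radL ℓ) ^ 2 / ((z : ℂ) - srcL ℓ) + srcL ℓ =
        -((radL ℓ : ℂ) ^ 2 / ((z : ℂ) - srcL ℓ)) := by ring
    rw [this, norm_neg, norm_div]
    have h2 : ‖(radL ℓ : ℂ) ^ 2‖ = (radL ℓ) ^ 2 := by
      rw [norm_pow, Complex.norm_real, Real.norm_eq_abs, abs_of_pos hrpos']
    rw [h2, div_lt_iff₀ habs]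
    nlinarith
  · have him : (matL ℓ • z).im = (radL ℓ) ^ 2 * z.im / Complex.normSq ((z:ℂ) - srcL ℓ) := by
      rw [← UpperHalfPlane.coe_im, matL_smul]
      simp only [Complex.sub_im, Complex.neg_im, Complex.ofReal_im, neg_zero, zero_sub,
        Complex.div_im, Complex.ofReal_re, Complex.sub_re, Complex.neg_re,
        UpperHalfPlane.coe_im]
      have hre : (((radL ℓ : ℝ) : ℂ) ^ 2).im = 0 := by
        rw [← Complex.ofReal_pow, Complex.ofReal_im]
      have hre2 : (((radL ℓ : ℝ) : ℂ) ^ 2).re = (radL ℓ) ^ 2 := by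
        rw [← Complex.ofReal_pow, Complex.ofReal_re]
      rw [hre, hre2]
      simp only [Complex.sub_im, Complex.ofReal_im, sub_zero, UpperHalfPlane.coe_im]
      ring
    rw [him]
    have hns : Complex.normSq ((z:ℂ) - srcL ℓ) = ‖(z:ℂ) - srcL ℓ‖ ^ 2 :=
      Complex.normSq_eq_norm_sq _
    rw [hns, div_lt_iff₀ (by positivity)]
    have : (radL ℓ) ^ 2 < ‖(z:ℂ) - srcL ℓ‖ ^ 2 := by nlinarith
    nlinarith [z.im_pos]

/-! ### Words -/

/-- Product of the matrices of a word. -/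
def prodW (w : List Lett) : SL(2, ℝ) := (w.map matL).prod

lemma prodW_nil : prodW [] = 1 := rfl

lemma prodW_cons (a : Lett) (t : List Lett) : prodW (a :: t) = matL a * prodW t := by
  simp [prodW]

lemma prodW_append (u v : List Lett) : prodW (u ++ v) = prodW u * prodW v := by
  simp [prodW]

/-- Adjacency relation for reduced words: `b` may follow `a` iff `b ≠ a⁻¹`. -/
def RelW (a b : Lett) : Prop := b ≠ linv a

lemma matL_mul_linv (a : Lett) : matL a * matL (linv a) = 1 := by
  rw [matL_linv, mul_inv_cancel]

/-- Ping-pong: a reduced word ending in `g`, applied to a point strictly outside the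
source disk of `g`, lands strictly inside the target disk of its first letter and
strictly decreases the imaginary part. -/
lemma ping : ∀ (t : List Lett) (g : Lett), List.Chain' RelW (t ++ [g]) → ∀ z : ℍ,
    radL g < ‖(z : ℂ) - srcL g‖ →
    (∀ f, (t ++ [g]).head? = some f →
      ‖((prodW (t ++ [g]) • z : ℍ) : ℂ) + srcL f‖ < radL f) ∧
    (prodW (t ++ [g]) • z).im < z.im := by
  intro t
  induction t with
  | nil =>
    intro g _ z hz
    have := letter_step g z hz
    simp only [List.nil_append, List.head?_cons]
    constructor
    · rintro f hf
      obtain rfl : g = f := by simpa using hf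
      simpa [prodW] using this.1
    · simpa [prodW] using this.2
  | cons a t IH =>
    intro g hch z hz
    have hne : t ++ [g] ≠ [] := by simp
    set f₀ := (t ++ [g]).head hne with hf₀
    have hhead : (t ++ [g]).head? = some f₀ := by
      rw [hf₀]; exact List.head?_eq_head hne
    have hch' : List.Chain' RelW (t ++ [g]) := by
      have : (a :: t) ++ [g] = a :: (t ++ [g]) := by simp
      rw [this] at hch
      exact hch.tail
    have hrel : RelW a f₀ := by
      have : (a :: t) ++ [g] = a :: (t ++ [g]) := by simp
      rw [this] at hch
      exact List.isChain_cons.mp hch |>.1 f₀ hhead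
    obtain ⟨habs, him⟩ := IH g hch' z hz
    have habs₀ := habs f₀ hhead
    set z' : ℍ := prodW (t ++ [g]) • z with hz'
    -- z' is in the closed disk of (linv f₀); a ≠ linv f₀
    have hne2 : linv f₀ ≠ a := by
      intro hc
      exact hrel (by rw [← hc, linv_linv])
    have hout : radL a < ‖(z' : ℂ) - srcL a‖ := by
      apply outside_of_inside (linv f₀) a hne2
      rw [srcL_linv, radL_linv]
      have : (z' : ℂ) - (-srcL f₀ : ℝ) = (z' : ℂ) + srcL f₀ := by push_cast; ring
      rw [this]
      exact le_of_lt habs₀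
    have hstep := letter_step a z' hout
    have hprod : prodW ((a :: t) ++ [g]) • z = matL a • z' := by
      rw [hz']
      have : (a :: t) ++ [g] = a :: (t ++ [g]) := by simp
      rw [this, prodW_cons, mul_smul]
    constructor
    · intro f hf
      obtain rfl : a = f := by simpa using hf
      rw [hprod]
      exact hstep.1
    · rw [hprod]
      exact lt_trans hstep.2 him

/-- Removing a redex from a non-reduced word. -/
lemma reduce_step : ∀ w : List Lett, ¬ List.Chain' RelW w →
    ∃ w', w'.length + 2 = w.length ∧ prodW w' = prodW w := by
  intro w
  induction w with
  | nil => intro h; exact absurd List.isChain_nil h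
  | cons a t IH =>
    intro h
    cases t with
    | nil => exact absurd (List.isChain_singleton a) h
    | cons b t' =>
      unfold List.Chain' at h
      rw [List.isChain_cons_cons] at h
      by_cases hab : RelW a b
      · have hnc : ¬ List.Chain' RelW (b :: t') := fun hc => h ⟨hab, hc⟩
        obtain ⟨w'', hl, hp⟩ := IH hnc
        refine ⟨a :: w'', by simp at hl ⊢; omega, ?_⟩
        simp only [prodW_cons, hp]
      · have hb : b = linv a := by
          by_contra hc; exact hab hc
        refine ⟨t', by simp, ?_⟩
        subst hb
        rw [prodW_cons, prodW_cons, ← mul_assoc, matL_mul_linv, one_mul]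

lemma chain_inv (w : List Lett) (h : List.Chain' RelW w) :
    List.Chain' RelW ((w.map linv).reverse) := by
  unfold List.Chain' at h ⊢
  rw [List.isChain_reverse, List.isChain_map]
  refine h.imp ?_
  intro a b hab
  show RelW (linv b) (linv a)
  intro hc
  rw [linv_linv] at hc
  exact hab hc.symm

lemma prodW_inv (w : List Lett) : prodW ((w.map linv).reverse) = (prodW w)⁻¹ := by
  induction w with
  | nil => simp [prodW]
  | cons a t IH =>
    have : ((a :: t).map linv).reverse = (t.map linv).reverse ++ [linv a] := by simp
    rw [this, prodW_append, IH, prodW_cons]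
    simp [matL_linv, mul_inv_rev, prodW]

/-- Main lemma: a word with a fixed point in `ℍ` has trivial product. -/
lemma main_lemma : ∀ (N : ℕ) (w : List Lett), w.length ≤ N → ∀ z : ℍ,
    prodW w • z = z → prodW w = 1 := by
  intro N
  induction N with
  | zero =>
    intro w hw z _
    have : w = [] := List.length_eq_zero_iff.mp (by omega)
    rw [this]; rfl
  | succ N IH =>
    intro w hw z hfix
    by_cases hch : List.Chain' RelW w
    · cases w with
      | nil => rfl
      | cons a t =>
        by_cases hcyc : t.getLast? = some (linv a)
        · -- conjugation case
          have htne : t ≠ [] := by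
            intro hc; rw [hc] at hcyc; simp at hcyc
          have hlast : t.getLast htne = linv a := by
            rwa [List.getLast?_eq_getLast htne, Option.some_inj] at hcyc
          set u := t.dropLast with hu
          have ht : u ++ [linv a] = t := by
            rw [hu, ← hlast]; exact List.dropLast_append_getLast htne
          have hchu : List.Chain' RelW u := by
            have h1 : List.Chain' RelW t := hch.tail
            rw [← ht] at h1
            exact (List.isChain_append.mp h1).1
          have hprod : prodW (a :: t) = matL a * prodW u * (matL a)⁻¹ := by
            rw [prodW_cons, ← ht, prodW_append, ← mul_assoc]
            congr 1
            simp [prodW, matL_linv]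
          set z' : ℍ := (matL a)⁻¹ • z with hz'
          have hfix' : prodW u • z' = z' := by
            rw [hprod] at hfix
            rw [hz']
            calc prodW u • ((matL a)⁻¹ • z)
                = (prodW u * (matL a)⁻¹) • z := (mul_smul _ _ _).symm
              _ = ((matL a)⁻¹ * (matL a * prodW u * (matL a)⁻¹)) • z := by
                  congr 1; group
              _ = (matL a)⁻¹ • ((matL a * prodW u * (matL a)⁻¹) • z) := mul_smul _ _ _
              _ = (matL a)⁻¹ • z := by rw [hfix]
          have hlen : u.length ≤ N := by
            have h1 : t.length = u.length + 1 := by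
              rw [← ht]; simp
            simp at hw; omega
          have := IH u hlen z' hfix'
          rw [hprod, this, mul_one]
          group
        · -- cyclically reduced case: contradiction
          exfalso
          have hwne : (a :: t) ≠ [] := by simp
          set glast := (a :: t).getLast hwne with hgl
          have hga : glast ≠ linv a := by
            cases t with
            | nil =>
              have : glast = a := rfl
              rw [this]
              exact fun hc => (linv_ne a) hc.symm
            | cons b t' =>
              intro hc
              apply hcyc
              rw [List.getLast?_eq_getLast (l := b :: t') (by simp), ← hc, hgl]
              exact congrArg some (List.getLast_cons (by simp)).symm
          have hdecomp : (a :: t).dropLast ++ [glast] = a :: t :=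
            List.dropLast_append_getLast hwne
          by_cases hz : radL glast < ‖(z : ℂ) - srcL glast‖
          · obtain ⟨_, him⟩ := ping (a :: t).dropLast glast (by rw [hdecomp]; exact hch) z hz
            rw [hdecomp, hfix] at him
            exact lt_irrefl _ him
          · push_neg at hz
            -- z is in the closed disk of glast; use the inverse word
            have hout : radL (linv a) < ‖(z : ℂ) - srcL (linv a)‖ :=
              outside_of_inside glast (linv a) hga z hz
            set v := ((a :: t).map linv).reverse with hv
            have hvdecomp : (t.map linv).reverse ++ [linv a] = v := by
              rw [hv]; simp
            have hvch : List.Chain' RelW ((t.map linv).reverse ++ [linv a]) := by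
              rw [hvdecomp, hv]
              exact chain_inv _ hch
            obtain ⟨_, him⟩ := ping (t.map linv).reverse (linv a) hvch z hout
            rw [hvdecomp, hv, prodW_inv] at him
            rw [← hfix, inv_smul_smul, hfix] at him
            exact lt_irrefl _ him
    · obtain ⟨w', hl, hp⟩ := reduce_step w hch
      rw [← hp]
      exact IH w' (by omega) z (by rw [hp]; exact hfix)

/-- Every element of the closure is the product of a word of letters. -/
lemma exists_word (g : SL(2, ℝ)) (hg : g ∈ ΓC) : ∃ w : List Lett, prodW w = g := by
  set S : Set SL(2, ℝ) :=
    {g | ∃ n k : ℕ, 1 ≤ n ∧ k < 2 ^ (n - 1) ∧ g = Mmat (alphaC n k) (radC n) (radC_ne n)} with hS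
  have hg' : g ∈ Submonoid.closure (S ∪ S⁻¹) := by
    have : g ∈ (Subgroup.closure S).toSubmonoid := hg
    rwa [Subgroup.closure_toSubmonoid] at this
  obtain ⟨l, hl, hprod⟩ := Submonoid.exists_list_of_mem_closure hg'
  subst hprod
  clear hg hg'
  induction l with
  | nil => exact ⟨[], rfl⟩
  | cons y l IH =>
    obtain ⟨w, hw⟩ := IH (fun x hx => hl x (List.mem_cons_of_mem y hx))
    have hy := hl y List.mem_cons_self
    rcases hy with hy | hy
    · obtain ⟨n, k, -, -, rfl⟩ := hy
      exact ⟨(n, k, true) :: w, by rw [prodW_cons, hw, List.prod_cons]; rfl⟩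
    · rw [Set.mem_inv] at hy
      obtain ⟨n, k, -, -, hy'⟩ := hy
      have : y = (Mmat (alphaC n k) (radC n) (radC_ne n))⁻¹ := by
        rw [← hy', inv_inv]
      subst this
      exact ⟨(n, k, false) :: w, by rw [prodW_cons, hw, List.prod_cons]; rfl⟩

/-- `Γ_C` acts freely on the upper half-plane. -/
theorem stmt_12 : ∀ g ∈ ΓC, ∀ z : ℍ, g • z = z → g = 1 := by
  intro g hg z hfix
  obtain ⟨w, rfl⟩ := exists_word g hg
  exact main_lemma w.length w le_rfl z hfix
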